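/- (Unique risk-averse equilibrium of Example 1) Consider the two-player finite game with S 1 = {U, D}, S 2 = {L, R} and risk-averse probability tensor p_1(U, L) = 19/25, p_1(D, L) = 6/25, p_1(U, R) = 7/10, p_1(D, R) = 3/10, p_2(L, U) = 2/5, p_2(R, U) = 3/5, p_2(L, D) = 7/25, p_2(R, D) = 18/25 (where p_2's second argument is player 1's pure strategy). Then the pure profile (U, R) is a risk-averse equilibrium, and it is the unique one: every risk-averse equilibrium σ* satisfies σ*_1(U) = 1 and σ*_2(R) = 1. In particular this game has no risk-averse equilibrium in which either player strictly mixes. -/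
import Mathlib


noncomputable section

/-- `σ` is a mixed strategy profile: each `σ j` is nonnegative and sums to one. -/
def IsMixedProfile {ι : Type*} {S : ι → Type*} [∀ j, Fintype (S j)]
    (σ : ∀ j, S j → ℝ) : Prop :=
  (∀ j s, 0 ≤ σ j s) ∧ ∀ j, ∑ s, σ j s = 1

/-- The mixed risk-averse probability `P_i(s_i, σ)` computed from the risk-averse
probability tensor `p`. -/
def mixedProb {ι : Type*} [Fintype ι] [DecidableEq ι] {S : ι → Type*}
    [∀ j, Fintype (S j)]
    (p : ∀ i : ι, S i → (∀ j : {j : ι // j ≠ i}, S j.1) → ℝ)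
    (i : ι) (si : S i) (σ : ∀ j, S j → ℝ) : ℝ :=
  ∑ t : ∀ j : {j : ι // j ≠ i}, S j.1,
    (∏ j : {j : ι // j ≠ i}, σ j.1 (t j)) * p i si t

/-- A risk-averse equilibrium: a mixed strategy profile in which every pure strategy
played with positive probability by player `i` maximizes `P_i(·, σ)`. -/
def IsRAE {ι : Type*} [Fintype ι] [DecidableEq ι] {S : ι → Type*}
    [∀ j, Fintype (S j)]
    (p : ∀ i : ι, S i → (∀ j : {j : ι // j ≠ i}, S j.1) → ℝ)
    (σ : ∀ j, S j → ℝ) : Prop :=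
  IsMixedProfile σ ∧
    ∀ (i : ι) (si : S i), 0 < σ i si →
      ∀ si' : S i, mixedProb p i si' σ ≤ mixedProb p i si σ

/-- In a two-player game, the (unique) opponent of player `i`. -/
def oppIdx (i : Fin 2) : {j : Fin 2 // j ≠ i} :=
  ⟨1 - i, by fin_cases i <;> decide⟩

/-- The risk-averse probability tensor of Example 1. Both players have strategy set
`Bool`; for player `0`, `true = U`, `false = D`, and for player `1`, `true = L`,
`false = R`. The tables encode `p₁(U,L) = 19/25`, `p₁(D,L) = 6/25`, `p₁(U,R) = 7/10`,
`p₁(D,R) = 3/10`, and `p₂(L,U) = 2/5`, `p₂(R,U) = 3/5`, `p₂(L,D) = 7/25`,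
`p₂(R,D) = 18/25`. -/
def pEx1 : ∀ i : Fin 2, Bool → (∀ _j : {j : Fin 2 // j ≠ i}, Bool) → ℝ :=
  fun i si t =>
    if i = 0 then
      match si, t (oppIdx i) with
      | true, true => 19/25
      | false, true => 6/25
      | true, false => 7/10
      | false, false => 3/10
    else
      match si, t (oppIdx i) with
      | true, true => 2/5
      | false, true => 3/5
      | true, false => 7/25
      | false, false => 18/25

/-- The degenerate (pure) mixed strategy profile playing `a j` with probability one. -/
def pureProf (a : Fin 2 → Bool) : ∀ _j : Fin 2, Bool → ℝ :=
  fun j s => if s = a j then 1 else 0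

/-- **Unique risk-averse equilibrium of Example 1.** The pure profile `(U, R)` is a
risk-averse equilibrium, and every risk-averse equilibrium `σ*` satisfies `σ*₁(U) = 1`
and `σ*₂(R) = 1`; in particular no player strictly mixes at any risk-averse
equilibrium. -/
instance oppUnique (i : Fin 2) : Unique {j : Fin 2 // j ≠ i} where
  default := oppIdx i
  uniq := by
    rintro ⟨j, hj⟩
    apply Subtype.ext
    fin_cases i <;> fin_cases j <;> first | rfl | exact absurd rfl hj

lemma mixedProb_eq (i : Fin 2) (si : Bool) (σ : ∀ _ : Fin 2, Bool → ℝ) :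
    mixedProb pEx1 i si σ =
      σ (oppIdx i).1 true * pEx1 i si (fun _ => true) +
      σ (oppIdx i).1 false * pEx1 i si (fun _ => false) := by
  have hbij : Function.Bijective
      (fun b : Bool => (fun _ => b : ∀ _j : {j : Fin 2 // j ≠ i}, Bool)) := by
    constructor
    · intro a b h; exact congrFun h (oppIdx i)
    · intro t
      refine ⟨t (oppIdx i), ?_⟩
      funext j
      have : j = oppIdx i := Subsingleton.elim _ _
      rw [this]
  rw [mixedProb,
    ← Fintype.sum_bijective _ hbij
      (fun b => σ (oppIdx i).1 b * pEx1 i si (fun _ => b)) _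
      (fun b => by simp only [Fintype.prod_unique]; rfl)]
  rw [Fintype.sum_bool]

theorem example1_unique_risk_averse_equilibrium :
    IsRAE pEx1 (pureProf ![true, false]) ∧
    ∀ σ : ∀ _j : Fin 2, Bool → ℝ, IsRAE pEx1 σ → σ 0 true = 1 ∧ σ 1 false = 1 := by
  constructor
  · refine ⟨⟨fun j s => ?_, fun j => ?_⟩, fun i si hpos si' => ?_⟩
    · unfold pureProf; split <;> norm_num
    · rw [Fintype.sum_bool]; fin_cases j <;> simp [pureProf]
    · fin_cases i
      · have hsi : si = true := by
          by_contra h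
          simp [pureProf, h] at hpos
        subst hsi
        rw [mixedProb_eq, mixedProb_eq]
        cases si' <;> norm_num [pEx1, oppIdx, pureProf]
      · have hsi : si = false := by
          by_contra h
          simp at h
          simp [pureProf, h] at hpos
        subst hsi
        rw [mixedProb_eq, mixedProb_eq]
        cases si' <;> norm_num [pEx1, oppIdx, pureProf]
  · rintro σ ⟨⟨hnn, hsum⟩, hbr⟩
    have h0 : σ 0 true + σ 0 false = 1 := by
      have := hsum 0; rwa [Fintype.sum_bool] at this
    have h1 : σ 1 true + σ 1 false = 1 := by
      have := hsum 1; rwa [Fintype.sum_bool] at this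
    have hlt0 : mixedProb pEx1 0 false σ < mixedProb pEx1 0 true σ := by
      rw [mixedProb_eq, mixedProb_eq]
      have e1 : ((oppIdx 0 : {j : Fin 2 // j ≠ (0:Fin 2)}).1 : Fin 2) = 1 := rfl
      rw [e1]
      norm_num [pEx1, oppIdx]
      linarith [hnn 1 true, hnn 1 false]
    have hlt1 : mixedProb pEx1 1 true σ < mixedProb pEx1 1 false σ := by
      rw [mixedProb_eq, mixedProb_eq]
      have e1 : ((oppIdx 1 : {j : Fin 2 // j ≠ (1:Fin 2)}).1 : Fin 2) = 0 := rfl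
      rw [e1]
      norm_num [pEx1, oppIdx]
      linarith [hnn 0 true, hnn 0 false]
    have hf0 : σ 0 false = 0 := by
      by_contra h
      have hpos : 0 < σ 0 false := lt_of_le_of_ne (hnn 0 false) (Ne.symm h)
      exact absurd (hbr 0 false hpos true) (not_le.mpr hlt0)
    have hf1 : σ 1 true = 0 := by
      by_contra h
      have hpos : 0 < σ 1 true := lt_of_le_of_ne (hnn 1 true) (Ne.symm h)
      exact absurd (hbr 1 true hpos false) (not_le.mpr hlt1)
    constructor <;> linarith
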